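/- The expected cost C_exp attains a global minimum over ℝ × [0,∞), and every global minimizer (X*,Y*) of C_exp over ℝ × [0,∞) satisfies 0 < X* < W and Y* > 0. -/

import Mathlib

open Real MeasureTheory Filter
set_option maxHeartbeats 1000000

lemma cs2 (b p q r s : ℝ) (hb : 0 ≤ b) :
    b*(p*q) + r*s ≤ Real.sqrt (b*p^2+r^2) * Real.sqrt (b*q^2+s^2) := by
  rcases le_or_gt (b*(p*q) + r*s) 0 with h | h
  · exact h.trans (by positivity)
  · rw [← Real.sqrt_mul (by positivity)]
    rw [show b*(p*q)+r*s = Real.sqrt ((b*(p*q)+r*s)^2) from (Real.sqrt_sq h.le).symm]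
    apply Real.sqrt_le_sqrt
    nlinarith [sq_nonneg (p*s - q*r), sq_nonneg b, mul_nonneg hb (sq_nonneg (p*s - q*r))]

lemma sqrt_quad_sub (b u v Y Z : ℝ) (hb : 0 ≤ b) :
    Real.sqrt (b*u^2 + Y^2) ≤ Real.sqrt (b*v^2 + Z^2) + (Real.sqrt b * |u - v| + |Y - Z|) := by
  have h1 : Real.sqrt (b*(u-v)^2 + (Y-Z)^2) ≤ Real.sqrt b * |u - v| + |Y - Z| := by
    rw [show Real.sqrt b * |u-v| = Real.sqrt (b * (u-v)^2) by
      rw [Real.sqrt_mul hb, Real.sqrt_sq_eq_abs]]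
    rw [show |Y - Z| = Real.sqrt ((Y-Z)^2) from (Real.sqrt_sq_eq_abs _).symm]
    have e1 : Real.sqrt (b*(u-v)^2)^2 = b*(u-v)^2 := Real.sq_sqrt (by positivity)
    have e2 : Real.sqrt ((Y-Z)^2)^2 = (Y-Z)^2 := Real.sq_sqrt (by positivity)
    calc Real.sqrt (b*(u-v)^2 + (Y-Z)^2)
        ≤ Real.sqrt ((Real.sqrt (b*(u-v)^2) + Real.sqrt ((Y-Z)^2))^2) := by
          apply Real.sqrt_le_sqrt; nlinarith [Real.sqrt_nonneg (b*(u-v)^2), Real.sqrt_nonneg ((Y-Z)^2)]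
      _ = _ := Real.sqrt_sq (by positivity)
  have h2 : Real.sqrt (b*u^2 + Y^2) ≤ Real.sqrt (b*v^2 + Z^2) + Real.sqrt (b*(u-v)^2 + (Y-Z)^2) := by
    have hA : (0:ℝ) ≤ Real.sqrt (b*v^2 + Z^2) := Real.sqrt_nonneg _
    have hB : (0:ℝ) ≤ Real.sqrt (b*(u-v)^2 + (Y-Z)^2) := Real.sqrt_nonneg _
    have key : b*u^2 + Y^2 ≤ (Real.sqrt (b*v^2 + Z^2) + Real.sqrt (b*(u-v)^2 + (Y-Z)^2))^2 := by
      have hcs := cs2 b v (u-v) Z (Y-Z) hb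
      have e1 : Real.sqrt (b*v^2+Z^2)^2 = b*v^2+Z^2 := Real.sq_sqrt (by positivity)
      have e2 : Real.sqrt (b*(u-v)^2+(Y-Z)^2)^2 = b*(u-v)^2+(Y-Z)^2 := Real.sq_sqrt (by positivity)
      nlinarith
    calc Real.sqrt (b*u^2 + Y^2) ≤ Real.sqrt ((Real.sqrt (b*v^2 + Z^2) + Real.sqrt (b*(u-v)^2 + (Y-Z)^2))^2) := Real.sqrt_le_sqrt key
    _ = _ := Real.sqrt_sq (by positivity)
  linarith

lemma sqrt_quad_lip (b u v Y Z : ℝ) (hb : 0 ≤ b) :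
    |Real.sqrt (b*u^2 + Y^2) - Real.sqrt (b*v^2 + Z^2)| ≤ Real.sqrt b * |u - v| + |Y - Z| := by
  rw [abs_sub_le_iff]
  constructor
  · linarith [sqrt_quad_sub b u v Y Z hb]
  · have := sqrt_quad_sub b v u Z Y hb
    rw [abs_sub_comm v u, abs_sub_comm Z Y] at this
    linarith

lemma II_of_bdd {f : ℝ → ℝ} (hf : Measurable f) {C A B : ℝ} (h : ∀ x, |f x| ≤ C) :
    IntervalIntegrable f volume A B := by
  rw [intervalIntegrable_iff]
  apply Integrable.mono' (g := fun _ => C) (integrableOn_const measure_Ioc_lt_top.ne)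
    hf.aestronglyMeasurable.restrict
  exact Filter.Eventually.of_forall h

lemma le_sqrt_of_sq_le (Y s : ℝ) (hY : 0 ≤ Y) (hs : Y^2 ≤ s) : Y ≤ Real.sqrt s := by
  rw [show Y = Real.sqrt (Y^2) from (Real.sqrt_sq hY).symm]; exact Real.sqrt_le_sqrt hs

lemma key_step (b Ys t u W : ℝ) (hb : 0 < b) (hY : 0 < Ys) (hu : 0 ≤ u) (huW : u ≤ W)
    (ht : 0 < t) (htW : t ≤ W) :
    Real.sqrt (b*(u-t)^2 + Ys^2) - Real.sqrt (b*u^2 + Ys^2) ≤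
      b*t^2/(2*Ys) - (2*b*t/(2*Real.sqrt (b*W^2+Ys^2)))*u := by
  set A := Real.sqrt (b*(u-t)^2 + Ys^2) with hA
  set B := Real.sqrt (b*u^2 + Ys^2) with hB
  set S := 2*Real.sqrt (b*W^2+Ys^2) with hS
  have hA2 : A^2 = b*(u-t)^2 + Ys^2 := Real.sq_sqrt (by positivity)
  have hB2 : B^2 = b*u^2 + Ys^2 := Real.sq_sqrt (by positivity)
  have hAY : Ys ≤ A := le_sqrt_of_sq_le _ _ hY.le (by nlinarith)
  have hBY : Ys ≤ B := le_sqrt_of_sq_le _ _ hY.le (by nlinarith)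
  have hABpos : 0 < A + B := by linarith
  have hut : |u - t| ≤ W := abs_le.2 ⟨by linarith, by linarith⟩
  have hut2 : (u-t)^2 ≤ W^2 := sq_le_sq' (by linarith [abs_le.1 hut]) (by linarith [abs_le.1 hut])
  have hAS : A ≤ Real.sqrt (b*W^2+Ys^2) := Real.sqrt_le_sqrt (by nlinarith)
  have hBS : B ≤ Real.sqrt (b*W^2+Ys^2) := Real.sqrt_le_sqrt (by nlinarith [mul_self_le_mul_self hu huW])
  have hABS : A + B ≤ S := by rw [hS]; linarith
  have hSpos : 0 < S := lt_of_lt_of_le hABpos hABS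
  have hid : A - B = (b*(t^2 - 2*t*u))/(A+B) := by
    rw [eq_div_iff hABpos.ne']
    nlinarith [hA2, hB2]
  rw [hid]
  have hsplit : (b*(t^2 - 2*t*u))/(A+B) = b*t^2/(A+B) - (2*b*t*u)/(A+B) := by
    field_simp
  rw [hsplit]
  have h1 : b*t^2/(A+B) ≤ b*t^2/(2*Ys) := by
    apply div_le_div_of_nonneg_left (by positivity) (by linarith) (by linarith)
  have h2 : (2*b*t*u)/S ≤ (2*b*t*u)/(A+B) := by
    rcases eq_or_lt_of_le hu with h | h
    · simp [← h]
    · apply div_le_div_of_nonneg_left (by positivity) hABpos hABS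
  have h3 : (2*b*t/S)*u = (2*b*t*u)/S := by ring
  linarith [h2, h1, h3.le, h3.ge]

/-- `C_exp` attains a global minimum over ℝ × [0,∞), and every global minimizer
`(X*,Y*)` satisfies `0 < X* < W` and `Y* > 0`. -/
theorem stmt_6
    (W M a b c : ℝ) (φ : ℝ → ℝ)
    (hW : 0 < W) (hM : 0 < M) (hφm : Measurable φ)
    (hφ0 : ∀ x, 0 ≤ φ x) (hφM : ∀ x, φ x ≤ M)
    (hφs : ∀ x, x ∉ Set.Icc (0:ℝ) W → φ x = 0)
    (hφ1 : (∫ x in (0:ℝ)..W, φ x) = 1)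
    (hb : 0 < b) (hc : 0 < c) (hca : c < a)
    (Cexp : ℝ → ℝ → ℝ)
    (hCexp : ∀ X Y : ℝ, Cexp X Y =
      ∫ x in (0:ℝ)..W, (a * Real.sqrt (b * (X - x) ^ 2 + Y ^ 2) - c * Y) * φ x) :
    (∃ Xs Ys : ℝ, 0 ≤ Ys ∧ ∀ X Y : ℝ, 0 ≤ Y → Cexp Xs Ys ≤ Cexp X Y) ∧
    (∀ Xs Ys : ℝ, 0 ≤ Ys → (∀ X Y : ℝ, 0 ≤ Y → Cexp Xs Ys ≤ Cexp X Y) →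
      0 < Xs ∧ Xs < W ∧ 0 < Ys) := by
  have hb' : (0:ℝ) ≤ b := hb.le
  have ha : 0 < a := hc.trans hca
  have hsb : 0 < Real.sqrt b := Real.sqrt_pos.2 hb
  -- measurability of the integrand
  have hmeas : ∀ X Y : ℝ, Measurable (fun x => (a * Real.sqrt (b * (X - x) ^ 2 + Y ^ 2) - c * Y) * φ x) := by
    intro X Y
    apply Measurable.mul _ hφm
    apply Measurable.sub _ measurable_const
    apply Measurable.const_mul
    exact (Real.continuous_sqrt.comp (by continuity)).measurable
  -- integrability
  have hInt : ∀ X Y : ℝ, IntervalIntegrable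
      (fun x => (a * Real.sqrt (b * (X - x) ^ 2 + Y ^ 2) - c * Y) * φ x) volume 0 W := by
    intro X Y
    apply II_of_bdd (hmeas X Y) (C := (a*(Real.sqrt b*(|X|+W) + |Y|) + c*|Y|)*M)
    intro x
    rcases eq_or_ne (φ x) 0 with h | h
    · rw [h, mul_zero, abs_zero]; positivity
    · have hx : x ∈ Set.Icc (0:ℝ) W := by by_contra hx; exact h (hφs x hx)
      have h1 : Real.sqrt (b*(X-x)^2 + Y^2) ≤ Real.sqrt b * |X - x| + |Y| := by
        have := sqrt_quad_sub b (X - x) 0 Y 0 hb'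
        simpa using this
      have h2 : |X - x| ≤ |X| + W := by
        have := abs_sub X x
        have h3 : |x| ≤ W := abs_le.2 ⟨by linarith [hx.1], hx.2⟩
        calc |X - x| ≤ |X| + |x| := abs_sub _ _
        _ ≤ |X| + W := by linarith
      have hs : Real.sqrt (b*(X-x)^2+Y^2) ≤ Real.sqrt b*(|X|+W) + |Y| := by
        refine h1.trans ?_
        have := mul_le_mul_of_nonneg_left h2 hsb.le
        linarith
      rw [abs_mul, abs_of_nonneg (hφ0 x)]
      apply mul_le_mul _ (hφM x) (hφ0 x) (by positivity)
      calc |a * Real.sqrt (b*(X-x)^2+Y^2) - c*Y| ≤ |a * Real.sqrt (b*(X-x)^2+Y^2)| + |c*Y| := abs_sub _ _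
      _ = a * Real.sqrt (b*(X-x)^2+Y^2) + c*|Y| := by
          rw [abs_mul, abs_mul, abs_of_nonneg ha.le, abs_of_nonneg hc.le,
            abs_of_nonneg (Real.sqrt_nonneg _)]
      _ ≤ a*(Real.sqrt b*(|X|+W) + |Y|) + c*|Y| := by nlinarith
  have hφI : IntervalIntegrable φ volume 0 W :=
    II_of_bdd hφm (C := M) (fun x => by rw [abs_of_nonneg (hφ0 x)]; exact hφM x)
  -- difference formula
  have hdiff : ∀ X Y X' Y' : ℝ, Cexp X' Y' - Cexp X Y =
      ∫ x in (0:ℝ)..W, ((a * Real.sqrt (b * (X' - x) ^ 2 + Y' ^ 2) - c * Y')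
        - (a * Real.sqrt (b * (X - x) ^ 2 + Y ^ 2) - c * Y)) * φ x := by
    intro X Y X' Y'
    rw [hCexp, hCexp, ← intervalIntegral.integral_sub (hInt X' Y') (hInt X Y)]
    congr 1; funext x; ring
  -- lower (coercivity) bound
  have hlow : ∀ X Y : ℝ, 0 ≤ Y →
      (a-c)/2 * (Real.sqrt b * max (|X| - W) 0 + Y) ≤ Cexp X Y := by
    intro X Y hY
    rw [hCexp]
    have h0 : (a-c)/2 * (Real.sqrt b * max (|X| - W) 0 + Y)
        = ∫ x in (0:ℝ)..W, ((a-c)/2 * (Real.sqrt b * max (|X| - W) 0 + Y)) * φ x := by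
      rw [intervalIntegral.integral_const_mul, hφ1, mul_one]
    rw [h0]
    apply intervalIntegral.integral_mono_on hW.le (hφI.const_mul _) (hInt X Y)
    intro x hx
    have hs1 : Y ≤ Real.sqrt (b*(X-x)^2+Y^2) := le_sqrt_of_sq_le _ _ hY (by nlinarith [sq_nonneg (X-x)])
    have hs2 : Real.sqrt b * max (|X|-W) 0 ≤ Real.sqrt (b*(X-x)^2+Y^2) := by
      have hmx : max (|X|-W) 0 ≤ |X - x| := by
        apply max_le _ (abs_nonneg _)
        have h3 : |x| ≤ W := abs_le.2 ⟨by linarith [hx.1], hx.2⟩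
        calc |X| - W ≤ |X| - |x| := by linarith
        _ ≤ |X - x| := abs_sub_abs_le_abs_sub _ _
      calc Real.sqrt b * max (|X|-W) 0 ≤ Real.sqrt b * |X - x| := by
            exact mul_le_mul_of_nonneg_left hmx hsb.le
      _ = Real.sqrt (b*(X-x)^2) := by rw [Real.sqrt_mul hb', Real.sqrt_sq_eq_abs]
      _ ≤ Real.sqrt (b*(X-x)^2+Y^2) := Real.sqrt_le_sqrt (by nlinarith [sq_nonneg Y])
    apply mul_le_mul_of_nonneg_right _ (hφ0 x)
    nlinarith [Real.sqrt_nonneg (b*(X-x)^2+Y^2), hca, hc]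
  -- Lipschitz bound
  have hLip : ∀ p q : ℝ × ℝ, |Cexp q.1 q.2 - Cexp p.1 p.2|
      ≤ (a*(Real.sqrt b + 1) + c) * dist q p := by
    intro p q
    set d := dist q p with hd
    have hd0 : 0 ≤ d := dist_nonneg
    have hd1 : |q.1 - p.1| ≤ d := by
      rw [← Real.dist_eq, hd, Prod.dist_eq]; exact le_max_left _ _
    have hd2 : |q.2 - p.2| ≤ d := by
      rw [← Real.dist_eq, hd, Prod.dist_eq]; exact le_max_right _ _
    rw [hdiff p.1 p.2 q.1 q.2]
    have habs := intervalIntegral.abs_integral_le_integral_abs (a := (0:ℝ)) (b := W)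
      (f := fun x => ((a * Real.sqrt (b * (q.1 - x) ^ 2 + q.2 ^ 2) - c * q.2)
        - (a * Real.sqrt (b * (p.1 - x) ^ 2 + p.2 ^ 2) - c * p.2)) * φ x) (μ := volume) hW.le
    refine habs.trans ?_
    have h0 : (a*(Real.sqrt b + 1) + c) * d
        = ∫ x in (0:ℝ)..W, ((a*(Real.sqrt b + 1) + c) * d) * φ x := by
      rw [intervalIntegral.integral_const_mul, hφ1, mul_one]
    rw [h0]
    have hI : IntervalIntegrable (fun x => ((a * Real.sqrt (b * (q.1 - x) ^ 2 + q.2 ^ 2) - c * q.2)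
        - (a * Real.sqrt (b * (p.1 - x) ^ 2 + p.2 ^ 2) - c * p.2)) * φ x) volume 0 W := by
      simpa [sub_mul] using (hInt q.1 q.2).sub (hInt p.1 p.2)
    apply intervalIntegral.integral_mono_on hW.le hI.abs (hφI.const_mul _)
    intro x _
    rw [abs_mul, abs_of_nonneg (hφ0 x)]
    apply mul_le_mul_of_nonneg_right _ (hφ0 x)
    have hlip := sqrt_quad_lip b (q.1 - x) (p.1 - x) q.2 p.2 hb'
    have he : (q.1 - x) - (p.1 - x) = q.1 - p.1 := by ring
    rw [he] at hlip
    calc |(a * Real.sqrt (b * (q.1 - x) ^ 2 + q.2 ^ 2) - c * q.2)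
        - (a * Real.sqrt (b * (p.1 - x) ^ 2 + p.2 ^ 2) - c * p.2)|
        = |a * (Real.sqrt (b * (q.1 - x) ^ 2 + q.2 ^ 2) - Real.sqrt (b * (p.1 - x) ^ 2 + p.2 ^ 2))
            - c * (q.2 - p.2)| := by ring_nf
      _ ≤ a * |Real.sqrt (b * (q.1 - x) ^ 2 + q.2 ^ 2) - Real.sqrt (b * (p.1 - x) ^ 2 + p.2 ^ 2)|
            + c * |q.2 - p.2| := by
          refine (abs_sub _ _).trans ?_
          rw [abs_mul, abs_mul, abs_of_nonneg ha.le, abs_of_nonneg hc.le]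
      _ ≤ a * (Real.sqrt b * |q.1 - p.1| + |q.2 - p.2|) + c * |q.2 - p.2| := by
          linarith [mul_le_mul_of_nonneg_left hlip ha.le]
      _ ≤ (a*(Real.sqrt b + 1) + c) * d := by
          nlinarith [mul_le_mul_of_nonneg_left hd1 (mul_nonneg ha.le hsb.le),
            mul_le_mul_of_nonneg_left hd2 ha.le, mul_le_mul_of_nonneg_left hd2 hc.le]
  have hcont : Continuous (fun p : ℝ × ℝ => Cexp p.1 p.2) := by
    rw [Metric.continuous_iff]
    intro p ε hε
    have hK0 : (0:ℝ) < a*(Real.sqrt b + 1) + c := by positivity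
    refine ⟨ε / (a*(Real.sqrt b + 1) + c), by positivity, fun q hq => ?_⟩
    rw [Real.dist_eq]
    calc |Cexp q.1 q.2 - Cexp p.1 p.2| ≤ (a*(Real.sqrt b + 1) + c) * dist q p := hLip p q
    _ < (a*(Real.sqrt b + 1) + c) * (ε / (a*(Real.sqrt b + 1) + c)) :=
        mul_lt_mul_of_pos_left hq hK0
    _ = ε := by field_simp
  -- existence of global minimizer
  have hac : 0 < a - c := by linarith
  set V := Cexp 0 0 with hV
  have hV0 : 0 ≤ V := by
    have h := hlow 0 0 le_rfl
    have h2 : (0:ℝ) ≤ (a-c)/2 * (Real.sqrt b * max (|(0:ℝ)| - W) 0 + 0) := by positivity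
    linarith
  set T1 := 2*(V+1)/((a-c)*Real.sqrt b) with hT1
  set T2 := 2*(V+1)/(a-c) with hT2
  have hVpos : 0 < V + 1 := by linarith
  have hT1pos : 0 < T1 := div_pos (by linarith) (by positivity)
  have hT2pos : 0 < T2 := div_pos (by linarith) hac
  have hbig1 : ∀ X Y : ℝ, 0 ≤ Y → W + T1 ≤ |X| → V + 1 ≤ Cexp X Y := by
    intro X Y hY hX
    have h1 := hlow X Y hY
    have h2 : T1 ≤ max (|X| - W) 0 := le_max_of_le_left (by linarith)
    have h3 : V+1 = (a-c)/2 * (Real.sqrt b * T1) := by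
      rw [hT1]; field_simp
    have h4 : (a-c)/2 * (Real.sqrt b * T1) ≤ (a-c)/2 * (Real.sqrt b * max (|X|-W) 0 + Y) := by
      nlinarith [mul_le_mul_of_nonneg_left h2 hsb.le]
    linarith
  have hbig2 : ∀ X Y : ℝ, T2 ≤ Y → V + 1 ≤ Cexp X Y := by
    intro X Y hY2
    have hY : 0 ≤ Y := le_trans hT2pos.le hY2
    have h1 := hlow X Y hY
    have h3 : V+1 = (a-c)/2 * T2 := by rw [hT2]; field_simp
    have h4 : (a-c)/2 * T2 ≤ (a-c)/2 * (Real.sqrt b * max (|X|-W) 0 + Y) := by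
      have h5 : (0:ℝ) ≤ Real.sqrt b * max (|X|-W) 0 := by positivity
      nlinarith
    linarith
  have hmem00 : ((0:ℝ),(0:ℝ)) ∈ Set.Icc ((-(W+T1), 0):ℝ×ℝ) ((W+T1, T2)) :=
    Set.mem_Icc.2 ⟨Prod.mk_le_mk.2 ⟨by linarith, le_rfl⟩, Prod.mk_le_mk.2 ⟨by linarith, hT2pos.le⟩⟩
  obtain ⟨p0, hp0K, hp0min⟩ := (isCompact_Icc (a := ((-(W+T1), 0):ℝ×ℝ))
    (b := ((W+T1, T2):ℝ×ℝ))).exists_isMinOn ⟨((0:ℝ),(0:ℝ)), hmem00⟩ hcont.continuousOn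
  rw [isMinOn_iff] at hp0min
  have hp02 : 0 ≤ p0.2 := ((Set.mem_Icc.1 hp0K).1).2
  have hglobal : ∀ X Y : ℝ, 0 ≤ Y → Cexp p0.1 p0.2 ≤ Cexp X Y := by
    intro X Y hY
    by_cases hmem : ((X, Y):ℝ×ℝ) ∈ Set.Icc ((-(W+T1), 0):ℝ×ℝ) ((W+T1, T2))
    · exact hp0min (X,Y) hmem
    · have hout : W + T1 ≤ |X| ∨ T2 ≤ Y := by
        by_contra hcon
        push_neg at hcon
        obtain ⟨h1, h2⟩ := hcon
        have := abs_lt.1 h1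
        exact hmem (Set.mem_Icc.2 ⟨Prod.mk_le_mk.2 ⟨by linarith [this.1], hY⟩,
          Prod.mk_le_mk.2 ⟨by linarith [this.2], h2.le⟩⟩)
      have hV1 : V + 1 ≤ Cexp X Y := by
        rcases hout with h | h
        exacts [hbig1 X Y hY h, hbig2 X Y h]
      have h2 : Cexp p0.1 p0.2 ≤ V := hp0min ((0:ℝ),(0:ℝ)) hmem00
      linarith
  -- support positivity
  have hφIoo : IntegrableOn φ (Set.Ioo 0 W) volume :=
    ((intervalIntegrable_iff_integrableOn_Ioc_of_le hW.le).1 hφI).mono_set Set.Ioo_subset_Ioc_self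
  have hsupp : 0 < volume (Function.support φ ∩ Set.Ioo 0 W) := by
    have h1 : (0:ℝ) < ∫ x in Set.Ioo 0 W, φ x := by
      rw [← MeasureTheory.integral_Ioc_eq_integral_Ioo, ← intervalIntegral.integral_of_le hW.le, hφ1]
      norm_num
    exact (setIntegral_pos_iff_support_of_nonneg_ae
      (Filter.Eventually.of_forall (fun x => hφ0 x)) hφIoo).1 h1
  -- strict comparison when moving X strictly closer
  have hstrict : ∀ X X' Y : ℝ, (∀ x ∈ Set.Ioo (0:ℝ) W, (X'-x)^2 < (X-x)^2) →
      Cexp X' Y < Cexp X Y := by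
    intro X X' Y hlt
    have hIb : IntegrableOn (fun x => ((a * Real.sqrt (b * (X - x) ^ 2 + Y ^ 2) - c * Y)
        - (a * Real.sqrt (b * (X' - x) ^ 2 + Y ^ 2) - c * Y)) * φ x) (Set.Ioo 0 W) volume := by
      refine (((intervalIntegrable_iff_integrableOn_Ioc_of_le hW.le).1 ?_).mono_set
        Set.Ioo_subset_Ioc_self)
      simpa [sub_mul] using (hInt X Y).sub (hInt X' Y)
    have key : 0 < Cexp X Y - Cexp X' Y := by
      rw [hdiff X' Y X Y, intervalIntegral.integral_of_le hW.le,
        MeasureTheory.integral_Ioc_eq_integral_Ioo]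
      refine (setIntegral_pos_iff_support_of_nonneg_ae ?_ hIb).2 ?_
      · rw [EventuallyLE, ae_restrict_iff' measurableSet_Ioo]
        refine Filter.Eventually.of_forall (fun x hx => ?_)
        have h1 : Real.sqrt (b*(X'-x)^2+Y^2) ≤ Real.sqrt (b*(X-x)^2+Y^2) :=
          Real.sqrt_le_sqrt (by nlinarith [le_of_lt (hlt x hx)])
        simp only [Pi.zero_apply]
        apply mul_nonneg _ (hφ0 x)
        nlinarith
      · refine lt_of_lt_of_le hsupp (measure_mono ?_)
        rintro x ⟨hφx, hxI⟩
        refine ⟨?_, hxI⟩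
        have h1 : Real.sqrt (b*(X'-x)^2+Y^2) < Real.sqrt (b*(X-x)^2+Y^2) := by
          apply Real.sqrt_lt_sqrt (by positivity)
          nlinarith [hlt x hxI]
        have hφp : 0 < φ x := lt_of_le_of_ne (hφ0 x) (Ne.symm hφx)
        have h2 : 0 < ((a * Real.sqrt (b * (X - x) ^ 2 + Y ^ 2) - c * Y)
            - (a * Real.sqrt (b * (X' - x) ^ 2 + Y ^ 2) - c * Y)) * φ x := by
          apply mul_pos _ hφp
          nlinarith
        exact Function.mem_support.2 (ne_of_gt h2)
    linarith
  -- integrability of x*φ and (W-x)*φ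
  have hxφI : IntervalIntegrable (fun x => x * φ x) volume 0 W := by
    apply II_of_bdd (measurable_id.mul hφm) (C := W*M)
    intro x
    rcases eq_or_ne (φ x) 0 with h | h
    · simp only [Pi.mul_apply, id_eq]; rw [h, mul_zero, abs_zero]; positivity
    · have hx : x ∈ Set.Icc (0:ℝ) W := by by_contra hx; exact h (hφs x hx)
      simp only [Pi.mul_apply, id_eq]
      rw [abs_mul, abs_of_nonneg (hφ0 x), abs_of_nonneg hx.1]
      exact mul_le_mul hx.2 (hφM x) (hφ0 x) hW.le
  have hwφI : IntervalIntegrable (fun x => (W - x) * φ x) volume 0 W := by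
    apply II_of_bdd ((measurable_const.sub measurable_id).mul hφm) (C := W*M)
    intro x
    rcases eq_or_ne (φ x) 0 with h | h
    · simp only [Pi.mul_apply, Pi.sub_apply, id_eq]; rw [h, mul_zero, abs_zero]; positivity
    · have hx : x ∈ Set.Icc (0:ℝ) W := by by_contra hx; exact h (hφs x hx)
      simp only [Pi.mul_apply, Pi.sub_apply, id_eq]
      rw [abs_mul, abs_of_nonneg (hφ0 x), abs_of_nonneg (by linarith [hx.2] : (0:ℝ) ≤ W - x)]
      exact mul_le_mul (by linarith [hx.1]) (hφM x) (hφ0 x) hW.le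
  have hJx : 0 < ∫ x in (0:ℝ)..W, x * φ x := by
    rw [intervalIntegral.integral_of_le hW.le, MeasureTheory.integral_Ioc_eq_integral_Ioo]
    refine (setIntegral_pos_iff_support_of_nonneg_ae ?_
      (((intervalIntegrable_iff_integrableOn_Ioc_of_le hW.le).1 hxφI).mono_set
        Set.Ioo_subset_Ioc_self)).2 ?_
    · rw [EventuallyLE, ae_restrict_iff' measurableSet_Ioo]
      exact Filter.Eventually.of_forall (fun x hx => mul_nonneg hx.1.le (hφ0 x))
    · refine lt_of_lt_of_le hsupp (measure_mono ?_)
      rintro x ⟨hφx, hxI⟩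
      exact ⟨Function.mem_support.2 (mul_ne_zero (ne_of_gt hxI.1) hφx), hxI⟩
  have hJw : 0 < ∫ x in (0:ℝ)..W, (W - x) * φ x := by
    rw [intervalIntegral.integral_of_le hW.le, MeasureTheory.integral_Ioc_eq_integral_Ioo]
    refine (setIntegral_pos_iff_support_of_nonneg_ae ?_
      (((intervalIntegrable_iff_integrableOn_Ioc_of_le hW.le).1 hwφI).mono_set
        Set.Ioo_subset_Ioc_self)).2 ?_
    · rw [EventuallyLE, ae_restrict_iff' measurableSet_Ioo]
      exact Filter.Eventually.of_forall (fun x hx => mul_nonneg (by linarith [hx.2]) (hφ0 x))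
    · refine lt_of_lt_of_le hsupp (measure_mono ?_)
      rintro x ⟨hφx, hxI⟩
      exact ⟨Function.mem_support.2 (mul_ne_zero (by nlinarith [hxI.2] : W - x ≠ 0) hφx), hxI⟩
  -- every minimizer has positive Y
  have hYlem : ∀ Xs Ys : ℝ, 0 ≤ Ys → (∀ X Y : ℝ, 0 ≤ Y → Cexp Xs Ys ≤ Cexp X Y) → 0 < Ys := by
    intro Xs Ys hYs hmin
    rcases lt_or_eq_of_le hYs with hpos | h0
    · exact hpos
    exfalso
    set δ := c/(8*a*M) with hδdef
    have hδ : 0 < δ := by positivity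
    set ε := Real.sqrt b * δ * c / (2*a) with hεdef
    have hε : 0 < ε := by positivity
    set ind := Set.indicator (Set.Ioo (Xs-δ) (Xs+δ)) (fun _ => M) with hind
    have hindI : IntervalIntegrable ind volume 0 W := by
      apply II_of_bdd (measurable_const.indicator measurableSet_Ioo) (C := M)
      intro x
      by_cases hx : x ∈ Set.Ioo (Xs-δ) (Xs+δ)
      · rw [Set.indicator_of_mem hx, abs_of_nonneg hM.le]
      · rw [Set.indicator_of_notMem hx, abs_zero]; exact hM.le
    have hindest : (∫ x in (0:ℝ)..W, ind x) ≤ M*(2*δ) := by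
      rw [intervalIntegral.integral_of_le hW.le, hind,
        setIntegral_indicator measurableSet_Ioo, setIntegral_const, smul_eq_mul]
      have h1 : volume (Set.Ioc 0 W ∩ Set.Ioo (Xs-δ) (Xs+δ)) ≤ ENNReal.ofReal (2*δ) := by
        refine le_trans (measure_mono Set.inter_subset_right) ?_
        rw [Real.volume_Ioo]
        exact ENNReal.ofReal_le_ofReal (by linarith)
      have h2 := ENNReal.toReal_mono ENNReal.ofReal_ne_top h1
      rw [ENNReal.toReal_ofReal (by linarith)] at h2
      rw [measureReal_def]
      nlinarith [ENNReal.toReal_nonneg (a := volume (Set.Ioc 0 W ∩ Set.Ioo (Xs-δ) (Xs+δ)))]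
    have hpt : ∀ x ∈ Set.Icc (0:ℝ) W,
        ((a * Real.sqrt (b * (Xs - x) ^ 2 + ε ^ 2) - c * ε)
          - (a * Real.sqrt (b * (Xs - x) ^ 2 + 0 ^ 2) - c * 0)) * φ x
        ≤ a*ε*ind x + (a*ε^2/(2*(Real.sqrt b*δ)) - c*ε)*φ x := by
      intro x _
      set S1' := Real.sqrt (b * (Xs - x) ^ 2 + ε ^ 2) with hS1'
      set S0 := Real.sqrt (b * (Xs - x) ^ 2 + 0 ^ 2) with hS0'
      have hfx : ((a * S1' - c * ε) - (a * S0 - c * 0)) * φ x = (a*(S1' - S0) - c*ε) * φ x := by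
        ring
      rw [hfx]
      have hindnn : 0 ≤ a*ε*ind x := by
        apply mul_nonneg (by positivity)
        exact Set.indicator_nonneg (fun _ _ => hM.le) x
      by_cases hnear : |Xs - x| < δ
      · have hxmem : x ∈ Set.Ioo (Xs-δ) (Xs+δ) := by
          have h2 := abs_lt.1 hnear
          exact ⟨by linarith [h2.2], by linarith [h2.1]⟩
        have hindx : ind x = M := by rw [hind, Set.indicator_of_mem hxmem]
        have hΔ : S1' - S0 ≤ ε := by
          have h2 := sqrt_quad_lip b (Xs-x) (Xs-x) ε 0 hb'
          rw [sub_self, abs_zero, mul_zero, zero_add, sub_zero, abs_of_pos hε] at h2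
          exact (abs_le.1 h2).2
        have h3 : (a*(S1' - S0) - c*ε) * φ x ≤ (a*ε - c*ε) * φ x :=
          mul_le_mul_of_nonneg_right (by nlinarith) (hφ0 x)
        have h4 : a*ε*φ x ≤ a*ε*M := mul_le_mul_of_nonneg_left (hφM x) (by positivity)
        have h5 : 0 ≤ (a*ε^2/(2*(Real.sqrt b*δ)))*φ x := mul_nonneg (by positivity) (hφ0 x)
        rw [hindx]
        nlinarith
      · push_neg at hnear
        have hS0b : Real.sqrt b * δ ≤ S0 := by
          have he : S0 = Real.sqrt b * |Xs-x| := by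
            rw [hS0', show b*(Xs-x)^2+0^2 = b*(Xs-x)^2 by ring, Real.sqrt_mul hb',
              Real.sqrt_sq_eq_abs]
          rw [he]
          exact mul_le_mul_of_nonneg_left hnear hsb.le
        have hS02 : S0^2 = b*(Xs-x)^2+0^2 := Real.sq_sqrt (by positivity)
        have hedef : (0:ℝ) ≤ ε^2/(2*(Real.sqrt b*δ)) := by positivity
        have he2 : 2*(ε^2/(2*(Real.sqrt b*δ)))*(Real.sqrt b*δ) = ε^2 := by
          field_simp
        have hup : b*(Xs-x)^2+ε^2 ≤ (S0 + ε^2/(2*(Real.sqrt b*δ)))^2 := by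
          nlinarith [mul_le_mul_of_nonneg_left hS0b hedef, sq_nonneg (ε^2/(2*(Real.sqrt b*δ)))]
        have hΔ : S1' ≤ S0 + ε^2/(2*(Real.sqrt b*δ)) := by
          have hS0nn : 0 ≤ S0 := Real.sqrt_nonneg _
          calc S1' ≤ Real.sqrt ((S0 + ε^2/(2*(Real.sqrt b*δ)))^2) := Real.sqrt_le_sqrt hup
          _ = _ := Real.sqrt_sq (by positivity)
        have h3 : (a*(S1' - S0) - c*ε) * φ x ≤ (a*ε^2/(2*(Real.sqrt b*δ)) - c*ε) * φ x := by
          apply mul_le_mul_of_nonneg_right _ (hφ0 x)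
          have : a*(S1' - S0) ≤ a*(ε^2/(2*(Real.sqrt b*δ))) :=
            mul_le_mul_of_nonneg_left (by linarith) ha.le
          have he3 : a*(ε^2/(2*(Real.sqrt b*δ))) = a*ε^2/(2*(Real.sqrt b*δ)) := by ring
          linarith [he3.le, he3.ge]
        linarith
    have hIl : IntervalIntegrable (fun x => ((a * Real.sqrt (b * (Xs - x) ^ 2 + ε ^ 2) - c * ε)
        - (a * Real.sqrt (b * (Xs - x) ^ 2 + 0 ^ 2) - c * 0)) * φ x) volume 0 W := by
      simpa [sub_mul] using (hInt Xs ε).sub (hInt Xs 0)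
    have hIr : IntervalIntegrable (fun x => a*ε*ind x + (a*ε^2/(2*(Real.sqrt b*δ)) - c*ε)*φ x)
        volume 0 W := (hindI.const_mul _).add (hφI.const_mul _)
    have hint := intervalIntegral.integral_mono_on hW.le hIl hIr hpt
    rw [intervalIntegral.integral_add (hindI.const_mul _) (hφI.const_mul _),
      intervalIntegral.integral_const_mul, intervalIntegral.integral_const_mul, hφ1, mul_one] at hint
    have hdd := hdiff Xs 0 Xs ε
    have hnum1 : a*ε*(M*(2*δ)) = c*ε/4 := by
      rw [hδdef]; field_simp; ring
    have hnum2 : a*ε^2/(2*(Real.sqrt b*δ)) = c*ε/4 := by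
      rw [hεdef]; field_simp; ring
    have hb1 : a*ε*(∫ x in (0:ℝ)..W, ind x) ≤ a*ε*(M*(2*δ)) :=
      mul_le_mul_of_nonneg_left hindest (by positivity)
    have hfinal : Cexp Xs ε - Cexp Xs 0 ≤ -(c*ε/2) := by
      rw [hdd]
      calc (∫ x in (0:ℝ)..W, ((a * Real.sqrt (b * (Xs - x) ^ 2 + ε ^ 2) - c * ε)
          - (a * Real.sqrt (b * (Xs - x) ^ 2 + 0 ^ 2) - c * 0)) * φ x)
          ≤ a*ε*(∫ x in (0:ℝ)..W, ind x) + (a*ε^2/(2*(Real.sqrt b*δ)) - c*ε) := hint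
        _ ≤ -(c*ε/2) := by
          rw [hnum2]
          linarith [hb1, hnum1.le, hnum1.ge]
    have hcontra := hmin Xs ε hε.le
    rw [← h0] at hcontra
    have hcε : 0 < c*ε/2 := by positivity
    linarith only [hfinal, hcontra, hcε]
  -- every minimizer has 0 < Xs and Xs < W
  have hXlem : ∀ Xs Ys : ℝ, 0 < Ys → (∀ X Y : ℝ, 0 ≤ Y → Cexp Xs Ys ≤ Cexp X Y) →
      0 < Xs ∧ Xs < W := by
    intro Xs Ys hYpos hmin
    set Jx := ∫ x in (0:ℝ)..W, x * φ x with hJxdef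
    set Jw := ∫ x in (0:ℝ)..W, (W - x) * φ x with hJwdef
    set S1 := 2*Real.sqrt (b*W^2+Ys^2) with hS1def
    have hS1pos : 0 < S1 := by positivity
    constructor
    · -- 0 < Xs
      rcases lt_trichotomy Xs 0 with hneg | hzero | hposX
      · exfalso
        have hlt : ∀ x ∈ Set.Ioo (0:ℝ) W, ((0:ℝ)-x)^2 < (Xs-x)^2 := by
          intro x hx
          rw [show ((0:ℝ)-x)^2 = x^2 by ring, show (Xs-x)^2 = (x-Xs)^2 by ring]
          exact sq_lt_sq' (by linarith only [hx.1, hneg]) (by linarith only [hneg])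
        have hlt2 := hstrict Xs 0 Ys hlt
        have h2 := hmin 0 Ys hYpos.le
        linarith only [hlt2, h2]
      · exfalso
        set t := min W (2*Jx*Ys/S1) with htdef
        have ht : 0 < t := lt_min hW (by positivity)
        have htW : t ≤ W := min_le_left _ _
        have hpt : ∀ x ∈ Set.Icc (0:ℝ) W,
            ((a * Real.sqrt (b * (t - x) ^ 2 + Ys ^ 2) - c * Ys)
              - (a * Real.sqrt (b * ((0:ℝ) - x) ^ 2 + Ys ^ 2) - c * Ys)) * φ x
            ≤ (a*(b*t^2/(2*Ys)))*φ x - (2*a*b*t/S1)*(x*φ x) := by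
          intro x hx
          have hks := key_step b Ys t x W hb hYpos hx.1 hx.2 ht htW
          rw [show b * (t - x) ^ 2 + Ys ^ 2 = b*(x-t)^2+Ys^2 by ring,
              show b * ((0:ℝ) - x) ^ 2 + Ys ^ 2 = b*x^2+Ys^2 by ring]
          have h2 : ((a * Real.sqrt (b*(x-t)^2+Ys^2) - c * Ys)
              - (a * Real.sqrt (b*x^2+Ys^2) - c * Ys)) * φ x
              = (a * (Real.sqrt (b*(x-t)^2+Ys^2) - Real.sqrt (b*x^2+Ys^2))) * φ x := by ring
          rw [h2]
          have h3 : a * (Real.sqrt (b*(x-t)^2+Ys^2) - Real.sqrt (b*x^2+Ys^2))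
              ≤ a*(b*t^2/(2*Ys) - (2*b*t/S1)*x) := by
            apply mul_le_mul_of_nonneg_left _ ha.le
            rw [hS1def]
            exact hks
          calc (a * (Real.sqrt (b*(x-t)^2+Ys^2) - Real.sqrt (b*x^2+Ys^2))) * φ x
              ≤ (a*(b*t^2/(2*Ys) - (2*b*t/S1)*x)) * φ x :=
                mul_le_mul_of_nonneg_right h3 (hφ0 x)
            _ = (a*(b*t^2/(2*Ys)))*φ x - (2*a*b*t/S1)*(x*φ x) := by ring
        have hIl : IntervalIntegrable (fun x => ((a * Real.sqrt (b * (t - x) ^ 2 + Ys ^ 2) - c * Ys)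
            - (a * Real.sqrt (b * ((0:ℝ) - x) ^ 2 + Ys ^ 2) - c * Ys)) * φ x) volume 0 W := by
          simpa [sub_mul] using (hInt t Ys).sub (hInt 0 Ys)
        have hIr : IntervalIntegrable
            (fun x => (a*(b*t^2/(2*Ys)))*φ x - (2*a*b*t/S1)*(x*φ x)) volume 0 W :=
          (hφI.const_mul _).sub (hxφI.const_mul _)
        have hint := intervalIntegral.integral_mono_on hW.le hIl hIr hpt
        rw [intervalIntegral.integral_sub (hφI.const_mul _) (hxφI.const_mul _),
          intervalIntegral.integral_const_mul, intervalIntegral.integral_const_mul,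
          hφ1, mul_one, ← hJxdef] at hint
        have h1 : t*S1 ≤ 2*Jx*Ys := by
          have h2 := min_le_right W (2*Jx*Ys/S1)
          calc t*S1 ≤ (2*Jx*Ys/S1)*S1 := mul_le_mul_of_nonneg_right h2 hS1pos.le
          _ = 2*Jx*Ys := by field_simp
        have habt : 0 < a*b*t := by positivity
        have hneg : a*(b*t^2/(2*Ys)) - (2*a*b*t/S1)*Jx < 0 := by
          rw [show (2*a*b*t/S1)*Jx = (2*a*b*t*Jx)/S1 by ring,
            show a*(b*t^2/(2*Ys)) = (a*b*t^2)/(2*Ys) by ring, sub_neg,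
            div_lt_div_iff₀ (by positivity) hS1pos]
          nlinarith [mul_le_mul_of_nonneg_left h1 habt.le, mul_pos (mul_pos habt hJx) hYpos]
        have hdd := hdiff 0 Ys t Ys
        have hcontra := hmin t Ys hYpos.le
        rw [hzero] at hcontra
        linarith only [hdd, hint, hneg, hcontra]
      · exact hposX
    · -- Xs < W
      rcases lt_trichotomy Xs W with hltW | heqW | hgtW
      · exact hltW
      · exfalso
        set t := min W (2*Jw*Ys/S1) with htdef
        have ht : 0 < t := lt_min hW (by positivity)
        have htW : t ≤ W := min_le_left _ _
        have hpt : ∀ x ∈ Set.Icc (0:ℝ) W,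
            ((a * Real.sqrt (b * ((W - t) - x) ^ 2 + Ys ^ 2) - c * Ys)
              - (a * Real.sqrt (b * (W - x) ^ 2 + Ys ^ 2) - c * Ys)) * φ x
            ≤ (a*(b*t^2/(2*Ys)))*φ x - (2*a*b*t/S1)*((W-x)*φ x) := by
          intro x hx
          have hks := key_step b Ys t (W-x) W hb hYpos (by linarith [hx.2]) (by linarith [hx.1]) ht htW
          rw [show b * ((W - t) - x) ^ 2 + Ys ^ 2 = b*((W-x)-t)^2+Ys^2 by ring]
          have h2 : ((a * Real.sqrt (b*((W-x)-t)^2+Ys^2) - c * Ys)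
              - (a * Real.sqrt (b*(W-x)^2+Ys^2) - c * Ys)) * φ x
              = (a * (Real.sqrt (b*((W-x)-t)^2+Ys^2) - Real.sqrt (b*(W-x)^2+Ys^2))) * φ x := by ring
          rw [h2]
          have h3 : a * (Real.sqrt (b*((W-x)-t)^2+Ys^2) - Real.sqrt (b*(W-x)^2+Ys^2))
              ≤ a*(b*t^2/(2*Ys) - (2*b*t/S1)*(W-x)) := by
            apply mul_le_mul_of_nonneg_left _ ha.le
            rw [hS1def]
            exact hks
          calc (a * (Real.sqrt (b*((W-x)-t)^2+Ys^2) - Real.sqrt (b*(W-x)^2+Ys^2))) * φ x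
              ≤ (a*(b*t^2/(2*Ys) - (2*b*t/S1)*(W-x))) * φ x :=
                mul_le_mul_of_nonneg_right h3 (hφ0 x)
            _ = (a*(b*t^2/(2*Ys)))*φ x - (2*a*b*t/S1)*((W-x)*φ x) := by ring
        have hIl : IntervalIntegrable
            (fun x => ((a * Real.sqrt (b * ((W - t) - x) ^ 2 + Ys ^ 2) - c * Ys)
            - (a * Real.sqrt (b * (W - x) ^ 2 + Ys ^ 2) - c * Ys)) * φ x) volume 0 W := by
          simpa [sub_mul] using (hInt (W-t) Ys).sub (hInt W Ys)
        have hIr : IntervalIntegrable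
            (fun x => (a*(b*t^2/(2*Ys)))*φ x - (2*a*b*t/S1)*((W-x)*φ x)) volume 0 W :=
          (hφI.const_mul _).sub (hwφI.const_mul _)
        have hint := intervalIntegral.integral_mono_on hW.le hIl hIr hpt
        rw [intervalIntegral.integral_sub (hφI.const_mul _) (hwφI.const_mul _),
          intervalIntegral.integral_const_mul, intervalIntegral.integral_const_mul,
          hφ1, mul_one, ← hJwdef] at hint
        have h1 : t*S1 ≤ 2*Jw*Ys := by
          have h2 := min_le_right W (2*Jw*Ys/S1)
          calc t*S1 ≤ (2*Jw*Ys/S1)*S1 := mul_le_mul_of_nonneg_right h2 hS1pos.le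
          _ = 2*Jw*Ys := by field_simp
        have habt : 0 < a*b*t := by positivity
        have hneg : a*(b*t^2/(2*Ys)) - (2*a*b*t/S1)*Jw < 0 := by
          rw [show (2*a*b*t/S1)*Jw = (2*a*b*t*Jw)/S1 by ring,
            show a*(b*t^2/(2*Ys)) = (a*b*t^2)/(2*Ys) by ring, sub_neg,
            div_lt_div_iff₀ (by positivity) hS1pos]
          nlinarith [mul_le_mul_of_nonneg_left h1 habt.le, mul_pos (mul_pos habt hJw) hYpos]
        have hdd := hdiff W Ys (W-t) Ys
        have hcontra := hmin (W-t) Ys hYpos.le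
        rw [heqW] at hcontra
        linarith only [hdd, hint, hneg, hcontra]
      · exfalso
        have hlt : ∀ x ∈ Set.Ioo (0:ℝ) W, (W-x)^2 < (Xs-x)^2 := by
          intro x hx
          exact sq_lt_sq' (by linarith only [hx.2, hgtW]) (by linarith only [hgtW])
        have hlt2 := hstrict Xs W Ys hlt
        have h2 := hmin W Ys hYpos.le
        linarith only [hlt2, h2]
  refine ⟨⟨p0.1, p0.2, hp02, hglobal⟩, fun Xs Ys hYs hmin => ?_⟩
  have hY := hYlem Xs Ys hYs hmin
  have hX := hXlem Xs Ys hY hmin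
  exact ⟨hX.1, hX.2, hY⟩
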